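/- Let W ∈ ℝ^{n×q} have full row rank (rank(W) = n < q) and T ∈ ℝ^{n×m} have full column rank (rank(T) = m, 0 < m < n). Assume the Gauss–Markov model: y = Xβ + ε with X = [W, T] fixed, β ∈ ℝᵖ deterministic, and ε a random vector with E[ε] = 0 and E[ε εᵀ] = σ² I_n. Let β̂_W := (P⊥_T W)† y be the partially regularized penalized-block estimate and define σ̂²_W := ‖y − P⊥_T W β̂_W‖₂² / rank(T). Then E[σ̂²_W] = σ² + ‖P_T E[y]‖₂² / rank(T), where E[y] = Xβ. -/

import Mathlib

open Matrix BigOperators MeasureTheory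

noncomputable section

/-- `B` is the Moore–Penrose pseudoinverse of `A`. -/
def IsMPInv {m n : Type*} [Fintype m] [Fintype n]
    (A : Matrix m n ℝ) (B : Matrix n m ℝ) : Prop :=
  A * B * A = A ∧ B * A * B = B ∧ (A * B)ᵀ = A * B ∧ (B * A)ᵀ = B * A

lemma aux_surj {n q : ℕ} (W : Matrix (Fin n) (Fin q) ℝ) (hW : W.rank = n) :
    Function.Surjective (W.mulVecLin) := by
  rw [← LinearMap.range_eq_top]
  apply Submodule.eq_top_of_finrank_eq
  rw [← Matrix.rank, hW, Module.finrank_pi, Fintype.card_fin]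

lemma aux_inj {n m : ℕ} (T : Matrix (Fin n) (Fin m) ℝ) (hT : T.rank = m) :
    Function.Injective (T.mulVecLin) := by
  rw [← LinearMap.ker_eq_bot]
  have h := LinearMap.finrank_range_add_finrank_ker T.mulVecLin
  rw [← Matrix.rank, hT, Module.finrank_pi, Fintype.card_fin] at h
  have : Module.finrank ℝ (LinearMap.ker T.mulVecLin) = 0 := by omega
  exact Submodule.finrank_eq_zero.mp this

lemma aux_ext {a b : ℕ} {M N : Matrix (Fin a) (Fin b) ℝ}
    (h : ∀ v, M *ᵥ v = N *ᵥ v) : M = N := by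
  ext i j
  have := congrFun (h (Pi.single j 1)) i
  simpa [Matrix.mulVec_single] using this

lemma aux_key {n : ℕ} {Ω : Type*} [MeasurableSpace Ω]
    (μ : Measure Ω) [IsProbabilityMeasure μ]
    (σ2 : ℝ) (ε : Ω → Fin n → ℝ)
    (hint1 : ∀ i, Integrable (fun ω => ε ω i) μ)
    (hint2 : ∀ i j, Integrable (fun ω => ε ω i * ε ω j) μ)
    (hmean : ∀ i, ∫ ω, ε ω i ∂μ = 0)
    (hcov : ∀ i j, ∫ ω, ε ω i * ε ω j ∂μ = if i = j then σ2 else 0)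
    (a : Fin n → ℝ) (P : Matrix (Fin n) (Fin n) ℝ) (i : Fin n) :
    Integrable (fun ω => (a i + ∑ k, P i k * ε ω k) ^ 2) μ ∧
    ∫ ω, (a i + ∑ k, P i k * ε ω k) ^ 2 ∂μ
      = a i ^ 2 + σ2 * ∑ k, (P i k) ^ 2 := by
  have hfeq : (fun ω => (a i + ∑ k, P i k * ε ω k) ^ 2)
      = fun ω => (a i ^ 2 + ∑ k, (2 * a i * P i k) * ε ω k)
          + ∑ k, ∑ l, (P i k * P i l) * (ε ω k * ε ω l) := by
    funext ω
    rw [add_sq, sq (∑ k, P i k * ε ω k), Finset.sum_mul_sum, Finset.mul_sum]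
    congr 1
    · congr 1
      exact Finset.sum_congr rfl fun k _ => by ring
    · exact Finset.sum_congr rfl fun k _ => Finset.sum_congr rfl fun l _ => by ring
  have hI1 : Integrable (fun ω => ∑ k, (2 * a i * P i k) * ε ω k) μ :=
    integrable_finset_sum _ fun k _ => (hint1 k).const_mul _
  have hI2 : Integrable (fun ω => ∑ k, ∑ l, (P i k * P i l) * (ε ω k * ε ω l)) μ :=
    integrable_finset_sum _ fun k _ =>
      integrable_finset_sum _ fun l _ => (hint2 k l).const_mul _
  have hI0 : Integrable (fun ω => a i ^ 2 + ∑ k, (2 * a i * P i k) * ε ω k) μ :=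
    (integrable_const _).add hI1
  have hIc : Integrable (fun _ : Ω => a i ^ 2) μ := integrable_const _
  constructor
  · rw [hfeq]; exact hI0.add hI2
  rw [hfeq, integral_add hI0 hI2, integral_add hIc hI1]
  have e1 : ∫ ω, ∑ k, (2 * a i * P i k) * ε ω k ∂μ = 0 := by
    rw [integral_finset_sum _ fun k _ => (hint1 k).const_mul _]
    simp [integral_const_mul, hmean]
  have e2 : ∫ ω, ∑ k, ∑ l, (P i k * P i l) * (ε ω k * ε ω l) ∂μ
      = σ2 * ∑ k, (P i k) ^ 2 := by
    rw [integral_finset_sum _ fun k _ =>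
      integrable_finset_sum _ fun l _ => (hint2 k l).const_mul _]
    rw [Finset.mul_sum]
    apply Finset.sum_congr rfl; intro k _
    rw [integral_finset_sum _ fun l _ => (hint2 k l).const_mul _]
    simp only [integral_const_mul, hcov, mul_ite, mul_zero]
    rw [Finset.sum_ite_eq Finset.univ k fun l => P i k * P i l * σ2]
    simp; ring
  rw [e1, e2, integral_const]
  simp

theorem variance_estimator_penalized_block
    {n q m : ℕ} {Ω : Type*} [MeasurableSpace Ω]
    (μ : Measure Ω) [IsProbabilityMeasure μ]
    (W : Matrix (Fin n) (Fin q) ℝ) (T : Matrix (Fin n) (Fin m) ℝ)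
    (hW : W.rank = n) (hnq : n < q)
    (hT : T.rank = m) (hm0 : 0 < m) (hmn : m < n)
    -- Gauss–Markov model: y = Xβ + ε with X = [W, T] fixed
    (β : Fin q ⊕ Fin m → ℝ) (σ2 : ℝ) (hσ2 : 0 ≤ σ2)
    (ε : Ω → Fin n → ℝ)
    (hint1 : ∀ i, Integrable (fun ω => ε ω i) μ)
    (hint2 : ∀ i j, Integrable (fun ω => ε ω i * ε ω j) μ)
    (hmean : ∀ i, ∫ ω, ε ω i ∂μ = 0)
    (hcov : ∀ i j, ∫ ω, ε ω i * ε ω j ∂μ = if i = j then σ2 else 0)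
    (y : Ω → Fin n → ℝ)
    (hy : ∀ ω, y ω = (Matrix.fromCols W T) *ᵥ β + ε ω)
    -- pseudoinverses `Tp = T†` (so `P_T = T T†`) and `Ap = (P⊥_T W)†`
    (Tp : Matrix (Fin m) (Fin n) ℝ) (hTp : IsMPInv T Tp)
    (Ap : Matrix (Fin q) (Fin n) ℝ)
    (hAp : IsMPInv (((1 : Matrix (Fin n) (Fin n) ℝ) - T * Tp) * W) Ap)
    -- β̂_W = (P⊥_T W)† y
    (βW : Ω → Fin q → ℝ) (hβW : ∀ ω, βW ω = Ap *ᵥ y ω) :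
    -- E[σ̂²_W] = σ² + ‖P_T E[y]‖₂² / rank(T), with
    -- σ̂²_W = ‖y − P⊥_T W β̂_W‖₂² / rank(T) and E[y] = Xβ
    ∫ ω, (∑ i, (y ω i
        - (((((1 : Matrix (Fin n) (Fin n) ℝ) - T * Tp) * W) *ᵥ βW ω)) i) ^ 2)
          / (T.rank : ℝ) ∂μ
      = σ2 + (∑ i, (((T * Tp) *ᵥ ((Matrix.fromCols W T) *ᵥ β)) i) ^ 2)
          / (T.rank : ℝ) := by
  -- algebraic setup
  set P := T * Tp with hPdef
  set Q := (1 : Matrix (Fin n) (Fin n) ℝ) - P with hQdef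
  set A := Q * W with hAdef
  have hP2 : P * P = P := by
    rw [hPdef, (Matrix.mul_assoc (T * Tp) T Tp).symm, hTp.1]
  have hQ2 : Q * Q = Q := by
    rw [hQdef]; noncomm_ring [hP2]
  have hQT : Qᵀ = Q := by
    rw [hQdef, transpose_sub, transpose_one, hTp.2.2.1]
  have hPT : Pᵀ = P := hTp.2.2.1
  -- A * Ap = Q
  have hAAp : A * Ap = Q := by
    have h1 : A * Ap * Q = Q := by
      apply aux_ext
      intro v
      obtain ⟨u, hu⟩ := aux_surj W hW v
      have hAu : A *ᵥ u = Q *ᵥ v := by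
        rw [hAdef, ← Matrix.mulVec_mulVec]
        rw [show W *ᵥ u = v from hu]
      calc (A * Ap * Q) *ᵥ v = (A * Ap) *ᵥ (Q *ᵥ v) := by
            rw [← Matrix.mulVec_mulVec]
        _ = (A * Ap) *ᵥ (A *ᵥ u) := by rw [hAu]
        _ = (A * Ap * A) *ᵥ u := by rw [Matrix.mulVec_mulVec]
        _ = A *ᵥ u := by rw [hAp.1]
        _ = Q *ᵥ v := hAu
    have h2 : Q * (A * Ap) = A * Ap := by
      rw [hAdef, ← Matrix.mul_assoc, ← Matrix.mul_assoc, hQ2]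
    have h3 : A * Ap * Q = A * Ap := by
      have := congrArg Matrix.transpose h2
      rwa [transpose_mul, hAp.2.2.1, hQT] at this
    rw [← h3, h1]
  -- Tp * T = 1
  have hTpT : Tp * T = 1 := by
    apply aux_ext
    intro v
    apply aux_inj T hT
    simp only [mulVecLin_apply, Matrix.mulVec_mulVec, Matrix.mulVec_one,
      Matrix.mul_one]
    rw [(Matrix.mul_assoc T Tp T).symm, hTp.1]
  -- constants
  set c := (Matrix.fromCols W T) *ᵥ β with hc
  set a := P *ᵥ c with ha
  -- residual identity
  have hres : ∀ ω i, y ω i - (A *ᵥ βW ω) i = a i + ∑ k, P i k * ε ω k := by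
    intro ω i
    have h1 : A *ᵥ βW ω = Q *ᵥ y ω := by
      rw [hβW, Matrix.mulVec_mulVec, hAAp]
    have h2 : y ω i - (Q *ᵥ y ω) i = (P *ᵥ y ω) i := by
      rw [hQdef, Matrix.sub_mulVec, Matrix.one_mulVec]
      simp
    have h3 : (P *ᵥ y ω) i = a i + ∑ k, P i k * ε ω k := by
      rw [hy, Matrix.mulVec_add, ha]
      simp [Matrix.mulVec, dotProduct]
    rw [h1, h2, h3]
  -- rewrite the integrand
  have hmain : ∫ ω, (∑ i, (y ω i - (A *ᵥ βW ω) i) ^ 2) / (T.rank : ℝ) ∂μ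
      = σ2 + (∑ i, a i ^ 2) / (T.rank : ℝ) := by
    have hcongr : ∀ ω, (∑ i, (y ω i - (A *ᵥ βW ω) i) ^ 2)
        = ∑ i, (a i + ∑ k, P i k * ε ω k) ^ 2 := fun ω =>
      Finset.sum_congr rfl fun i _ => by rw [hres ω i]
    have key := fun i => aux_key μ σ2 ε hint1 hint2 hmean hcov a P i
    calc ∫ ω, (∑ i, (y ω i - (A *ᵥ βW ω) i) ^ 2) / (T.rank : ℝ) ∂μ
        = ∫ ω, (∑ i, (a i + ∑ k, P i k * ε ω k) ^ 2) / (T.rank : ℝ) ∂μ := by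
          congr 1; funext ω; rw [hcongr ω]
      _ = (∫ ω, ∑ i, (a i + ∑ k, P i k * ε ω k) ^ 2 ∂μ) / (T.rank : ℝ) := by
          rw [integral_div]
      _ = (∑ i, ∫ ω, (a i + ∑ k, P i k * ε ω k) ^ 2 ∂μ) / (T.rank : ℝ) := by
          rw [integral_finset_sum _ fun i _ => (key i).1]
      _ = (∑ i, (a i ^ 2 + σ2 * ∑ k, (P i k) ^ 2)) / (T.rank : ℝ) := by
          congr 1; exact Finset.sum_congr rfl fun i _ => (key i).2
      _ = ((∑ i, a i ^ 2) + σ2 * ∑ i, ∑ k, (P i k) ^ 2) / (T.rank : ℝ) := by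
          rw [Finset.sum_add_distrib, Finset.mul_sum]
      _ = σ2 + (∑ i, a i ^ 2) / (T.rank : ℝ) := by
          have htr : ∑ i, ∑ k, (P i k) ^ 2 = (m : ℝ) := by
            have h1 : ∑ i, ∑ k, (P i k) ^ 2 = Matrix.trace (P * Pᵀ) := by
              simp [Matrix.trace, Matrix.mul_apply, Matrix.diag, sq]
            rw [h1, hPT, hP2, hPdef, Matrix.trace_mul_comm, hTpT,
              Matrix.trace_one]
            simp
          rw [htr, hT]
          have hm : (m : ℝ) ≠ 0 := Nat.cast_ne_zero.mpr hm0.ne'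
          field_simp
          ring
  exact hmain
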